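/- Let m ≥ 0 and let λ ∈ ℂ with λ ∉ [−√(m²+4), −m] ∪ [m, √(m²+4)]. Then there exists exactly one k ∈ ℂ with 0 < |k| < 1 such that λ² = m² + 2 − k − k⁻¹. -/

import Mathlib

open scoped ComplexOrder
open Matrix

noncomputable section

abbrev Mat2 : Type := Matrix (Fin 2) (Fin 2) ℂ
abbrev Vec2 : Type := EuclideanSpace ℂ (Fin 2)
abbrev Hsp : Type := lp (fun _ : ℤ => Vec2) 2

/-- A `2×2` complex matrix acting on `ℂ²` as a continuous linear map. -/
def mAct (A : Mat2) : Vec2 →L[ℂ] Vec2 := Matrix.toEuclideanCLM (𝕜 := ℂ) A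

/-- The spectral (operator) norm of a `2×2` complex matrix. -/
def specNorm (A : Mat2) : ℝ := ‖mAct A‖

/-- The Hilbert–Schmidt (Frobenius) norm of a `2×2` complex matrix. -/
def hsNorm (A : Mat2) : ℝ := Real.sqrt (∑ i, ∑ j, ‖A i j‖ ^ 2)

def bMat (m : ℝ) : Mat2 := !![(-m : ℂ), 1; 1, (m : ℂ)]

def aMat : Mat2 := !![0, 0; -1, 0]

/-- `D0` is the free discrete Dirac operator with mass `m`. -/
def IsFreeDirac (m : ℝ) (D0 : Hsp →L[ℂ] Hsp) : Prop :=
  ∀ u : Hsp, ∀ n : ℤ,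
    (D0 u) n = mAct aMat.transpose (u (n - 1)) + mAct (bMat m) (u n) + mAct aMat (u (n + 1))

/-- `Vop` is the block-diagonal operator with blocks `υ n`. -/
def IsBlockDiagOp (υ : ℤ → Mat2) (Vop : Hsp →L[ℂ] Hsp) : Prop :=
  ∀ u : Hsp, ∀ n : ℤ, (Vop u) n = mAct (υ n) (u n)

/-- The spectrum `[−√(m²+4), −m] ∪ [m, √(m²+4)]` as a subset of `ℂ`. -/
def sigma0 (m : ℝ) : Set ℂ :=
  Complex.ofReal '' (Set.Icc (-Real.sqrt (m ^ 2 + 4)) (-m) ∪ Set.Icc m (Real.sqrt (m ^ 2 + 4)))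

def T0mat (m : ℝ) (lam k : ℂ) : Mat2 :=
  (k⁻¹ - k)⁻¹ • !![lam - m, 1 - k; 1 - k, lam + m]

def T1mat (m : ℝ) (lam k : ℂ) : Mat2 :=
  (k * (k⁻¹ - k)⁻¹) • !![lam - m, 1 - k; 1 - k⁻¹, lam + m]

def Tmat (m : ℝ) (lam k : ℂ) : ℤ → Mat2 := fun j =>
  if j = 0 then T0mat m lam k
  else if 0 < j then k ^ (j.toNat - 1) • T1mat m lam k
  else (k ^ ((-j).toNat - 1) • T1mat m lam k).transpose

/-- The positive semidefinite square root of a positive semidefinite matrix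
(the definition `Matrix.PosSemidef.sqrt` of the older Mathlib, since removed). -/
def Matrix.PosSemidef.sqrt {n : Type*} [Fintype n] [DecidableEq n] {A : Matrix n n ℂ}
    (hA : A.PosSemidef) : Matrix n n ℂ :=
  hA.1.eigenvectorUnitary.1 * diagonal ((↑) ∘ (Real.sqrt ·) ∘ hA.1.eigenvalues) *
  (star hA.1.eigenvectorUnitary : Matrix n n ℂ)

theorem Matrix.PosSemidef.posSemidef_sqrt {n : Type*} [Fintype n] [DecidableEq n]
    {A : Matrix n n ℂ} (hA : A.PosSemidef) : hA.sqrt.PosSemidef := by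
  unfold Matrix.PosSemidef.sqrt
  have h : (star hA.1.eigenvectorUnitary : Matrix n n ℂ) = (hA.1.eigenvectorUnitary.1)ᴴ := by
    exact Matrix.star_eq_conjTranspose _
  rw [h]
  apply Matrix.PosSemidef.mul_mul_conjTranspose_same
  rw [Matrix.posSemidef_diagonal_iff]
  intro i
  simp only [Function.comp_apply]
  first
  | exact Complex.zero_le_real.mpr (Real.sqrt_nonneg _)
  | exact_mod_cast Real.sqrt_nonneg _

def wMat (υ : ℤ → Mat2) (n : ℤ) : Mat2 :=
  (Matrix.posSemidef_conjTranspose_mul_self (υ n)).sqrt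

def sqrtwMat (υ : ℤ → Mat2) (n : ℤ) : Mat2 :=
  (Matrix.posSemidef_conjTranspose_mul_self (υ n)).posSemidef_sqrt.sqrt

/-- The Birman–Schwinger operator `K(z) = √W (D₀ − z)⁻¹ U √W`. -/
def Kop (D0 sW Uop : Hsp →L[ℂ] Hsp) (z : ℂ) : Hsp →L[ℂ] Hsp :=
  sW * Ring.inverse (D0 - z • (1 : Hsp →L[ℂ] Hsp)) * Uop * sW

/-- The element of `ℓ²(ℤ, ℂ²)` supported at site `j` equal to the `β`-th standard basis vector. -/
def deltaVec (j : ℤ) (β : Fin 2) : Hsp := lp.single 2 j (EuclideanSpace.single β (1 : ℂ))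


/-- For `λ` outside `[−√(m²+4), −m] ∪ [m, √(m²+4)]` there is exactly one `k` with
`0 < |k| < 1` and `λ² = m² + 2 − k − k⁻¹`. -/
theorem stmt14 (m : ℝ) (hm : 0 ≤ m) (lam : ℂ) (hlam : lam ∉ sigma0 m) :
    ∃! k : ℂ, (0 < ‖k‖ ∧ ‖k‖ < 1) ∧
      lam ^ 2 = (m : ℂ) ^ 2 + 2 - k - k⁻¹ := by
  set w : ℂ := (m : ℂ) ^ 2 + 2 - lam ^ 2 with hw
  -- Step 1: w is not a real number in [-2, 2]
  have hA : ∀ t : ℝ, |t| ≤ 2 → w ≠ (t : ℂ) := by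
    intro t ht heq
    apply hlam
    have hs : lam ^ 2 = ((m ^ 2 + 2 - t : ℝ) : ℂ) := by
      push_cast
      linear_combination -heq
    set s : ℝ := m ^ 2 + 2 - t with hsdef
    obtain ⟨ht1, ht2⟩ := abs_le.mp ht
    have hs1 : m ^ 2 ≤ s := by simp only [hsdef]; linarith
    have hs2 : s ≤ m ^ 2 + 4 := by simp only [hsdef]; linarith
    have hre : lam.re ^ 2 - lam.im ^ 2 = s := by
      have := congrArg Complex.re hs
      simpa [pow_two, Complex.mul_re] using this
    have him0 : lam.re * lam.im = 0 := by
      have h := congrArg Complex.im hs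
      rw [pow_two, Complex.mul_im, Complex.ofReal_im] at h
      linarith
    have him : lam.im = 0 := by
      rcases mul_eq_zero.mp him0 with h | h
      · -- lam.re = 0 : then -im² = s ≥ m² ≥ 0
        have : lam.im ^ 2 ≤ 0 := by nlinarith
        nlinarith [sq_nonneg lam.im]
      · exact h
    have hre2 : lam.re ^ 2 = s := by nlinarith
    have hq : Real.sqrt (m ^ 2 + 4) ^ 2 = m ^ 2 + 4 :=
      Real.sq_sqrt (by positivity)
    have hqn : 0 ≤ Real.sqrt (m ^ 2 + 4) := Real.sqrt_nonneg _
    refine ⟨lam.re, ?_, ?_⟩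
    · rcases le_or_gt 0 lam.re with h0 | h0
      · exact Or.inr ⟨by nlinarith, by nlinarith⟩
      · exact Or.inl ⟨by nlinarith, by nlinarith⟩
    · exact Complex.ext rfl him.symm
  -- Step 2: roots of X² - wX + 1
  obtain ⟨d, hd⟩ : ∃ d : ℂ, d ^ 2 = w ^ 2 - 4 :=
    IsAlgClosed.exists_pow_nat_eq (w ^ 2 - 4) (n := 2) (by norm_num)
  set k1 : ℂ := (w + d) / 2 with hk1
  set k2 : ℂ := (w - d) / 2 with hk2
  have hsum : k1 + k2 = w := by simp [hk1, hk2]; ring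
  have hprod : k1 * k2 = 1 := by
    simp only [hk1, hk2]
    linear_combination (-(1 : ℂ)/4) * hd
  have hk1ne : k1 ≠ 0 := by
    intro h; rw [h, zero_mul] at hprod; exact one_ne_zero hprod.symm
  have hk2ne : k2 ≠ 0 := by
    intro h; rw [h, mul_zero] at hprod; exact one_ne_zero hprod.symm
  -- no root on the unit circle
  have hne1 : ∀ a b : ℂ, a * b = 1 → a + b = w → ‖a‖ ≠ 1 := by
    intro a b hab habw h1
    have hb : b = (starRingEnd ℂ) a := by
      have hcc : a * (starRingEnd ℂ) a = 1 := by
        rw [Complex.mul_conj]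
        norm_cast
        rw [Complex.normSq_eq_norm_sq, h1]; norm_num
      have ha0 : a ≠ 0 := by
        intro h; rw [h, zero_mul] at hab; exact one_ne_zero hab.symm
      field_simp at hab hcc
      rw [← hab] at hcc
      exact (mul_left_cancel₀ ha0 hcc.symm)
    have hw2 : w = ((2 * a.re : ℝ) : ℂ) := by
      rw [← habw, hb, Complex.add_conj]
    refine hA (2 * a.re) ?_ hw2
    have := Complex.abs_re_le_norm a
    rw [h1] at this
    rw [abs_mul]
    simp only [abs_two]
    nlinarith [abs_nonneg a.re]
  have habs1 : ‖k1‖ ≠ 1 := hne1 k1 k2 hprod hsum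
  have habs2 : ‖k2‖ ≠ 1 := hne1 k2 k1 ((mul_comm k2 k1).trans hprod)
    ((add_comm k2 k1).trans hsum)
  have hprodabs : ‖k1‖ * ‖k2‖ = 1 := by
    have := congrArg (‖·‖) hprod
    simpa using this
  have hk2inv : k2 = k1⁻¹ := eq_inv_of_mul_eq_one_left ((mul_comm k1 k2) ▸ hprod)
  -- pick the root inside the disk
  have hmain : ∃ k : ℂ, k ≠ 0 ∧ ‖k‖ < 1 ∧ k + k⁻¹ = w := by
    rcases lt_or_gt_of_ne habs1 with h | h
    · exact ⟨k1, hk1ne, h, by rw [← hk2inv]; exact hsum⟩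
    · refine ⟨k2, hk2ne, ?_, ?_⟩
      · nlinarith [norm_pos_iff.mpr hk2ne]
      · have : k1 = k2⁻¹ := eq_inv_of_mul_eq_one_left hprod
        rw [← this, add_comm]; exact hsum
  obtain ⟨k, hk0, hklt, hkw⟩ := hmain
  -- uniqueness helper
  have key : ∀ b : ℂ, b ≠ 0 → b + b⁻¹ = w → b = k ∨ b = k⁻¹ := by
    intro b hb hbw
    have hbq : b ^ 2 - w * b + 1 = 0 := by
      have h1 : b * (b + b⁻¹) = b * w := by rw [hbw]
      have h2 : b * b⁻¹ = 1 := mul_inv_cancel₀ hb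
      linear_combination h1 - h2
    have hkinv : k * k⁻¹ = 1 := mul_inv_cancel₀ hk0
    have hfac : (b - k) * (b - k⁻¹) = 0 := by
      calc (b - k) * (b - k⁻¹) = b ^ 2 - (k + k⁻¹) * b + k * k⁻¹ := by ring
        _ = b ^ 2 - w * b + 1 := by rw [hkw, hkinv]
        _ = 0 := hbq
    rcases mul_eq_zero.mp hfac with h | h
    · exact Or.inl (sub_eq_zero.mp h)
    · exact Or.inr (sub_eq_zero.mp h)
  refine ⟨k, ⟨⟨norm_pos_iff.mpr hk0, hklt⟩, by linear_combination hkw⟩, ?_⟩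
  intro y ⟨⟨hy0, hy1⟩, hyeq⟩
  have hy0' : y ≠ 0 := by
    intro h; rw [h] at hy0; simp at hy0
  have hyw : y + y⁻¹ = w := by rw [hw]; linear_combination hyeq
  rcases key y hy0' hyw with h | h
  · exact h
  · exfalso
    rw [h] at hy1
    rw [norm_inv] at hy1
    have hkpos : 0 < ‖k‖ := norm_pos_iff.mpr hk0
    rw [inv_lt_one_iff₀] at hy1
    rcases hy1 with h' | h'
    · nlinarith
    · nlinarith
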